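/- Fix D₃₃ > 0, D₄₄ > 0 and t > 0, and define p(y, β, γ) := (4π t² D₃₃ D₄₄)⁻² · exp(−M(c⁽¹⁾(y,β,γ), c⁽²⁾(β,γ))² / (4t)) for y ∈ ℝ³, β ∈ (−π,π)\{0}, γ ∈ ℝ. Then, with R := R_z(γ) R_y(β) R_z(−γ): p(−Rᵀ y, −β, γ) = p(y, β, γ). (Since Rᵀ = R_z(γ) R_y(−β) R_z(−γ) and Rᵀ e_z = n(−β, γ), this is exactly the symmetry property p_t^new(y, n) = p_t^new(−R_nᵀ y, R_nᵀ e_z) of Theorem 1.) -/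

import Mathlib

open Matrix

/-- The skew-symmetric matrix associated to a vector `c ∈ ℝ³`. -/
def skew (c : Fin 3 → ℝ) : Matrix (Fin 3) (Fin 3) ℝ :=
  !![0, -c 2, c 1; c 2, 0, -c 0; -c 1, c 0, 0]

/-- The Euclidean norm of a vector in `ℝ³`. -/
noncomputable def enorm3 (c : Fin 3 → ℝ) : ℝ :=
  Real.sqrt (c 0 ^ 2 + c 1 ^ 2 + c 2 ^ 2)

/-- Equation (11) of the paper: the spatial coefficients of the logarithm on `SE(3)`. -/
noncomputable def F (c x : Fin 3 → ℝ) : Fin 3 → ℝ :=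
  ((1 : Matrix (Fin 3) (Fin 3) ℝ) - (1 / 2 : ℝ) • skew c +
      ((enorm3 c)⁻¹ ^ 2 *
        (1 - enorm3 c / 2 * (Real.cos (enorm3 c / 2) / Real.sin (enorm3 c / 2)))) •
        (skew c * skew c)).mulVec x

/-- Counter-clockwise rotation about the `z`-axis by angle `θ`. -/
noncomputable def Rz (θ : ℝ) : Matrix (Fin 3) (Fin 3) ℝ :=
  !![Real.cos θ, -Real.sin θ, 0; Real.sin θ, Real.cos θ, 0; 0, 0, 1]

/-- The rotational logarithm coefficients `c⁽²⁾(β,γ) = β · R_z(γ) e_y` of the rotation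
`R_z(γ) R_y(β) R_z(−γ)` (section `α = −γ`). -/
noncomputable def c2 (β γ : ℝ) : Fin 3 → ℝ :=
  β • (Rz γ).mulVec ![0, 1, 0]

/-- The spatial logarithm coefficients `c⁽¹⁾(y,β,γ) = F(c⁽²⁾(β,γ), y)`. -/
noncomputable def c1 (y : Fin 3 → ℝ) (β γ : ℝ) : Fin 3 → ℝ :=
  F (c2 β γ) y


/-- The smoothed weighted modulus of the paper, on a coefficient vector
`c = (c¹,…,c⁶) = (a, b) ∈ ℝ³ × ℝ³ ≅ ℝ⁶`. -/
noncomputable def weightedModulus (D33 D44 : ℝ) (a b : Fin 3 → ℝ) : ℝ :=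
  ((a 0 ^ 2 + a 1 ^ 2) / (D33 * D44) + b 2 ^ 2 / D44 +
      (a 2 ^ 2 / D33 + (b 0 ^ 2 + b 1 ^ 2) / D44) ^ 2) ^ ((1 : ℝ) / 4)

/-- The new kernel approximation `p_t^new` of the paper, in the coordinates
`(y, β, γ)` of the section `α = −γ`:
`p(y,β,γ) = (4πt²D₃₃D₄₄)⁻² exp(−M(c⁽¹⁾(y,β,γ), c⁽²⁾(β,γ))²/(4t))`. -/
noncomputable def pNew (D33 D44 t : ℝ) (y : Fin 3 → ℝ) (β γ : ℝ) : ℝ :=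
  ((4 * Real.pi * t ^ 2 * D33 * D44) ^ 2)⁻¹ *
    Real.exp (-(weightedModulus D33 D44 (c1 y β γ) (c2 β γ)) ^ 2 / (4 * t))

/-- Counter-clockwise rotation about the `y`-axis by angle `θ`. -/
noncomputable def Ry (θ : ℝ) : Matrix (Fin 3) (Fin 3) ℝ :=
  !![Real.cos θ, 0, Real.sin θ; 0, 1, 0; -Real.sin θ, 0, Real.cos θ]


noncomputable def S0 (β : ℝ) : Matrix (Fin 3) (Fin 3) ℝ := !![0,0,β;0,0,0;-β,0,0]
noncomputable def kk (β : ℝ) : ℝ := 1 - β/2 * (Real.cos (β/2) / Real.sin (β/2))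

theorem c2_eq (β γ : ℝ) : c2 β γ = ![-β * Real.sin γ, β * Real.cos γ, 0] := by
  funext i; fin_cases i <;>
    simp [c2, Rz, Matrix.mulVec, dotProduct, Fin.sum_univ_three]

theorem Rz_mul_neg (γ : ℝ) : Rz γ * Rz (-γ) = 1 := by
  ext i j; fin_cases i <;> fin_cases j <;>
    simp [Rz, Matrix.mul_apply, Fin.sum_univ_three, Matrix.one_apply] <;>
    first
      | ring1
      | linear_combination Real.sin_sq_add_cos_sq γ
      | linear_combination -Real.sin_sq_add_cos_sq γ

theorem Rz_neg_mul (γ : ℝ) : Rz (-γ) * Rz γ = 1 := by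
  ext i j; fin_cases i <;> fin_cases j <;>
    simp [Rz, Matrix.mul_apply, Fin.sum_univ_three, Matrix.one_apply] <;>
    first
      | ring1
      | linear_combination Real.sin_sq_add_cos_sq γ
      | linear_combination -Real.sin_sq_add_cos_sq γ

theorem Rz_transpose (γ : ℝ) : (Rz γ)ᵀ = Rz (-γ) := by
  ext i j; fin_cases i <;> fin_cases j <;> simp [Rz]

theorem Ry_transpose (β : ℝ) : (Ry β)ᵀ = Ry (-β) := by
  ext i j; fin_cases i <;> fin_cases j <;> simp [Ry]

theorem skew_c2 (β γ : ℝ) : skew (c2 β γ) = Rz γ * S0 β * Rz (-γ) := by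
  rw [c2_eq]
  ext i j; fin_cases i <;> fin_cases j <;>
    simp [skew, Rz, S0, Matrix.mul_apply, Fin.sum_univ_three] <;> ring

theorem sinhalf (β : ℝ) : Real.sin β = 2 * Real.sin (β/2) * Real.cos (β/2) := by
  rw [show β = 2*(β/2) by ring, Real.sin_two_mul]; ring_nf

theorem coshalf (β : ℝ) : Real.cos β = 1 - 2 * Real.sin (β/2)^2 := by
  have h := Real.cos_two_mul (β/2)
  rw [show 2*(β/2) = β by ring] at h
  have := Real.sin_sq_add_cos_sq (β/2); linarith

theorem lemB (β : ℝ) (hs : Real.sin (β/2) ≠ 0) :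
    (1 - Real.cos β) - β/2 * Real.sin β + kk β * Real.cos β = kk β := by
  unfold kk; rw [sinhalf β, coshalf β]; field_simp
  linear_combination (0:ℝ) * Real.sin_sq_add_cos_sq (β/2)

theorem lemA (β : ℝ) (hs : Real.sin (β/2) ≠ 0) :
    -Real.sin β + β/2 * Real.cos β + kk β * Real.sin β = -(β/2) := by
  unfold kk; rw [sinhalf β, coshalf β]; field_simp
  linear_combination (-2*β:ℝ) * Real.sin_sq_add_cos_sq (β/2)

/-- The base (γ = 0) matrix identity. -/
theorem base_id (β : ℝ) (hβ0 : β ≠ 0) (hs : Real.sin (β/2) ≠ 0) :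
    ((1 : Matrix (Fin 3) (Fin 3) ℝ) + (1/2 : ℝ) • S0 β + (β⁻¹ ^ 2 * kk β) • (S0 β * S0 β))
        * Ry (-β)
      = 1 - (1/2 : ℝ) • S0 β + (β⁻¹ ^ 2 * kk β) • (S0 β * S0 β) := by
  have hA := lemA β hs
  have hB := lemB β hs
  have hS2 : (β⁻¹ ^ 2 * kk β) • (S0 β * S0 β)
      = (-(kk β)) • (!![1,0,0;0,0,0;0,0,1] : Matrix (Fin 3) (Fin 3) ℝ) := by
    ext i j; fin_cases i <;> fin_cases j <;>
      simp [S0, Matrix.mul_apply, Fin.sum_univ_three, Matrix.vecHead, Matrix.vecTail] <;>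
      first
        | ring1
        | (field_simp; try (left; ring1))
  rw [hS2]
  ext i j; fin_cases i <;> fin_cases j <;>
    simp [S0, Ry, Matrix.mul_apply, Fin.sum_univ_three, Matrix.one_apply,
      Matrix.vecHead, Matrix.vecTail] <;>
    first
      | ring1
      | linear_combination hA
      | linear_combination -hA
      | linear_combination hB
      | linear_combination -hB

theorem key_id (β γ : ℝ) (hβ0 : β ≠ 0) (hs : Real.sin (β/2) ≠ 0) :
    ((1 : Matrix (Fin 3) (Fin 3) ℝ) + (1/2 : ℝ) • skew (c2 β γ)
        + (β⁻¹ ^ 2 * kk β) • (skew (c2 β γ) * skew (c2 β γ)))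
        * (Rz γ * Ry β * Rz (-γ))ᵀ
      = 1 - (1/2 : ℝ) • skew (c2 β γ)
          + (β⁻¹ ^ 2 * kk β) • (skew (c2 β γ) * skew (c2 β γ)) := by
  have hQQ' := Rz_mul_neg γ
  have hQ'Q := Rz_neg_mul γ
  have cancel : ∀ X : Matrix (Fin 3) (Fin 3) ℝ, Rz (-γ) * (Rz γ * X) = X := by
    intro X; rw [← mul_assoc, hQ'Q, one_mul]
  have conj : ∀ A B : Matrix (Fin 3) (Fin 3) ℝ,
      (Rz γ * A * Rz (-γ)) * (Rz γ * B * Rz (-γ)) = Rz γ * (A * B) * Rz (-γ) := by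
    intro A B
    simp only [mul_assoc]
    rw [cancel]
  have hT : (Rz γ * Ry β * Rz (-γ))ᵀ = Rz γ * Ry (-β) * Rz (-γ) := by
    rw [Matrix.transpose_mul, Matrix.transpose_mul, Rz_transpose, Rz_transpose,
      Ry_transpose, neg_neg, ← mul_assoc]
  have hdec : ∀ (r s : ℝ) (A B : Matrix (Fin 3) (Fin 3) ℝ),
      (1 : Matrix (Fin 3) (Fin 3) ℝ) + r • (Rz γ * A * Rz (-γ)) + s • (Rz γ * B * Rz (-γ))
        = Rz γ * (1 + r • A + s • B) * Rz (-γ) := by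
    intro r s A B
    rw [Matrix.mul_add, Matrix.mul_add, Matrix.add_mul, Matrix.add_mul, Matrix.mul_one, hQQ',
      Matrix.mul_smul, Matrix.smul_mul, Matrix.mul_smul, Matrix.smul_mul]
  have hdecS : ∀ (r s : ℝ) (A B : Matrix (Fin 3) (Fin 3) ℝ),
      (1 : Matrix (Fin 3) (Fin 3) ℝ) - r • (Rz γ * A * Rz (-γ)) + s • (Rz γ * B * Rz (-γ))
        = Rz γ * (1 - r • A + s • B) * Rz (-γ) := by
    intro r s A B
    rw [Matrix.mul_add, Matrix.mul_sub, Matrix.add_mul, Matrix.sub_mul, Matrix.mul_one, hQQ',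
      Matrix.mul_smul, Matrix.smul_mul, Matrix.mul_smul, Matrix.smul_mul]
  rw [skew_c2, hT, conj, hdec, hdecS, conj, base_id β hβ0 hs]

theorem enorm3_c2 (β γ : ℝ) : enorm3 (c2 β γ) = |β| := by
  rw [c2_eq]
  have : (-β * Real.sin γ) ^ 2 + (β * Real.cos γ) ^ 2 + (0:ℝ) ^ 2 = β ^ 2 := by
    linear_combination β ^ 2 * Real.sin_sq_add_cos_sq γ
  simp only [enorm3]
  norm_num
  rw [show (β * Real.sin γ) ^ 2 + (β * Real.cos γ) ^ 2 = β ^ 2 by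
    linear_combination β ^ 2 * Real.sin_sq_add_cos_sq γ]
  simpa using Real.sqrt_sq_eq_abs β

theorem kappa_c2 (β γ : ℝ) (hβ0 : β ≠ 0) :
    (enorm3 (c2 β γ))⁻¹ ^ 2 *
        (1 - enorm3 (c2 β γ) / 2 *
          (Real.cos (enorm3 (c2 β γ) / 2) / Real.sin (enorm3 (c2 β γ) / 2)))
      = β⁻¹ ^ 2 * kk β := by
  rw [enorm3_c2]
  rcases abs_cases β with ⟨h, _⟩ | ⟨h, _⟩
  · rw [h]; rfl
  · rw [h]; unfold kk
    rw [show -β/2 = -(β/2) by ring, Real.cos_neg, Real.sin_neg, inv_neg]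
    rw [show (-β⁻¹)^2 = β⁻¹^2 by ring]
    ring

theorem skew_neg (c : Fin 3 → ℝ) : skew (-c) = -skew c := by
  ext i j; fin_cases i <;> fin_cases j <;> simp [skew]

theorem enorm3_neg (c : Fin 3 → ℝ) : enorm3 (-c) = enorm3 c := by
  simp [enorm3]

theorem c2_neg (β γ : ℝ) : c2 (-β) γ = -(c2 β γ) := by
  rw [c2_eq, c2_eq]; funext i; fin_cases i <;> simp <;> ring

theorem c1_neg (β γ : ℝ) (hβ0 : β ≠ 0) (hs : Real.sin (β/2) ≠ 0) (y : Fin 3 → ℝ) :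
    c1 (-(Rz γ * Ry β * Rz (-γ))ᵀ.mulVec y) (-β) γ = -(c1 y β γ) := by
  unfold c1 F
  rw [c2_neg, skew_neg, enorm3_neg, kappa_c2 β γ hβ0, smul_neg, sub_neg_eq_add,
    neg_mul_neg, Matrix.mulVec_neg, Matrix.mulVec_mulVec, key_id β γ hβ0 hs]

theorem wm_neg (D33 D44 : ℝ) (a b : Fin 3 → ℝ) :
    weightedModulus D33 D44 (-a) (-b) = weightedModulus D33 D44 a b := by
  simp [weightedModulus, neg_sq]

/-- Second assertion (equation (13)) of Theorem 1 of the paper: with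
`R = R_z(γ) R_y(β) R_z(−γ)`, the new kernel satisfies the symmetry
`p(−Rᵀ y, −β, γ) = p(y, β, γ)` (i.e. `p_t^new(y,n) = p_t^new(−R_nᵀ y, R_nᵀ e_z)`). -/
theorem pNew_symmetry (D33 D44 t : ℝ) (hD33 : 0 < D33) (hD44 : 0 < D44)
    (ht : 0 < t) (y : Fin 3 → ℝ) (β γ : ℝ) (hβ : β ∈ Set.Ioo (-Real.pi) Real.pi)
    (hβ0 : β ≠ 0) :
    pNew D33 D44 t (-(Rz γ * Ry β * Rz (-γ))ᵀ.mulVec y) (-β) γ =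
      pNew D33 D44 t y β γ := by
  have hpi := Real.pi_pos
  have hs : Real.sin (β/2) ≠ 0 := by
    intro h
    rw [Real.sin_eq_zero_iff_of_lt_of_lt (by linarith [hβ.1]) (by linarith [hβ.2])] at h
    exact hβ0 (by linarith)
  unfold pNew
  rw [c1_neg β γ hβ0 hs y, c2_neg, wm_neg]
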